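/- arXiv:2401.08729 — 2 statements merged into one kernel-verified Lean document; each statement's English description precedes it below -/
import Mathlib

section
/- Let A be a unital C*-algebra, equipped with the canonical partial order in which x ≤ y means y − x is a positive element (a self-adjoint element of the form z*z). Let S be a nonempty finite index set, n ≥ 1 a natural number, and let a, b : S × {1,…,n} → A be two families of elements of A. Then ∑_{I∈S} ( ∑_{i=1}^{n} a(I,i)·b(I,i) )* ( ∑_{i=1}^{n} a(I,i)·b(I,i) ) ≤ ( max_{I∈S} ∑_{i=1}^{n} ‖a(I,i)‖² ) · ∑_{I∈S} ∑_{i=1}^{n} b(I,i)*·b(I,i), where ‖·‖ is the C*-norm of A and the scalar on the right acts by scalar multiplication. -/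
open scoped ComplexOrder InnerProductSpace

open WithCStarModule CStarModule in
lemma cstar_cs_key
    {A : Type*} [NormedRing A] [StarRing A] [CStarRing A]
    [NormedAlgebra ℂ A] [StarModule ℂ A] [CompleteSpace A]
    [PartialOrder A] [StarOrderedRing A] {n : ℕ} (a b : Fin n → A) :
    star (∑ i, a i * b i) * (∑ i, a i * b i) ≤
      (∑ i, ‖a i‖ ^ 2) • ∑ i, star (b i) * b i := by
  letI : CStarAlgebra A := {}
  set x : C⋆ᵐᵒᵈ(A, Fin n → A) := (equiv A _).symm a with hx
  set y : C⋆ᵐᵒᵈ(A, Fin n → A) := (equiv A _).symm (fun i => star (b i)) with hy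
  have hinner : ⟪y, x⟫_A = ∑ i, a i * b i := by
    simp [pi_inner, hx, hy, inner_def]
  have h1 : ⟪x, y⟫_A * ⟪y, x⟫_A ≤ ‖x‖ ^ 2 • ⟪y, y⟫_A := inner_mul_inner_swap_le
  rw [show ⟪x, y⟫_A = star ⟪y, x⟫_A from (star_inner y x).symm, hinner] at h1
  have h2 : ⟪y, y⟫_A = ∑ i, star (b i) * b i := by
    simp [pi_inner, hy, inner_def]
  rw [h2] at h1
  refine h1.trans ?_
  have hxnorm : ‖x‖ ^ 2 ≤ ∑ i, ‖a i‖ ^ 2 := by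
    rw [pi_norm_sq]
    refine (norm_sum_le _ _).trans (Finset.sum_le_sum fun i _ => ?_)
    simp [hx, inner_def, CStarRing.norm_self_mul_star, sq]
  have hpos : (0 : A) ≤ ∑ i, star (b i) * b i :=
    Finset.sum_nonneg fun i _ => star_mul_self_nonneg _
  exact smul_le_smul_of_nonneg_right hxnorm hpos



/-- In a unital C*-algebra with its canonical order, for finite families
`a, b : S × {1,…,n} → A` one has
`∑_I |∑_i a(I,i)·b(I,i)|² ≤ (max_I ∑_i ‖a(I,i)‖²) · ∑_I ∑_i b(I,i)*·b(I,i)`. -/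
theorem cstar_cauchy_schwarz_families
    (A : Type*) [NormedRing A] [StarRing A] [CStarRing A]
    [NormedAlgebra ℂ A] [StarModule ℂ A] [CompleteSpace A]
    [PartialOrder A] [StarOrderedRing A]
    (S : Type*) [Fintype S] [Nonempty S] (n : ℕ) (hn : 1 ≤ n)
    (a b : S → Fin n → A) :
    ∑ I : S, star (∑ i : Fin n, a I i * b I i) * (∑ i : Fin n, a I i * b I i) ≤
      (Finset.univ.sup' Finset.univ_nonempty fun I : S => ∑ i : Fin n, ‖a I i‖ ^ 2) •
        ∑ I : S, ∑ i : Fin n, star (b I i) * b I i := by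
  rw [Finset.smul_sum]
  refine Finset.sum_le_sum fun I _ => (cstar_cs_key (a I) (b I)).trans ?_
  have hpos : (0 : A) ≤ ∑ i, star (b I i) * b I i :=
    Finset.sum_nonneg fun i _ => star_mul_self_nonneg _
  exact smul_le_smul_of_nonneg_right
    (Finset.le_sup' (fun I : S => ∑ i : Fin n, ‖a I i‖ ^ 2) (Finset.mem_univ I)) hpos
end

section
/- Let d ≥ 2 be an integer and let a, b, f be finite Haar polynomials on ℝ (finite ℂ-linear combinations of Haar functions h_I^i with I ∈ 𝒟, 1 ≤ i ≤ d−1), so that all the sums below have only finitely many nonzero terms. Define π_b(f) = ∑_{k∈ℤ} d_k b·f_{k−1}, Λ_b(f) = ∑_{k∈ℤ} d_k b·d_k f, R_b(f) = ∑_{k∈ℤ} b_{k−1}·d_k f, and V_{a,b}(f) = ∑_{k∈ℤ} d_k a · E_{k−1}( ∑_{j≥k} d_j b·d_j f ). Then the commutator identity [π_a, R_b](f) = π_a(R_b(f)) − R_b(π_a(f)) = −π_a( π_b(f) + Λ_b(f) ) + V_{a,b}(f) holds pointwise almost everywhere. -/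
open MeasureTheory Set Filter

noncomputable section

/-- The `d`-adic interval `I_{n,k} = [k·d^{-n}, (k+1)·d^{-n})`. -/
def dyadicI (d : ℕ) (n k : ℤ) : Set ℝ :=
  Set.Ico ((k : ℝ) * (d : ℝ) ^ (-n)) (((k : ℝ) + 1) * (d : ℝ) ^ (-n))

/-- The index `k` such that `x ∈ I_{n,k}`. -/
def dIdx (d : ℕ) (n : ℤ) (x : ℝ) : ℤ := ⌊x * (d : ℝ) ^ n⌋

/-- Conditional expectation `E_n g` with respect to the `d`-adic filtration:
on each `d`-adic interval of generation `n` it is the average of `g` over that interval. -/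
def condExpD (d : ℕ) (n : ℤ) (g : ℝ → ℂ) : ℝ → ℂ :=
  fun x => ((d : ℂ) ^ n) * ∫ t in dyadicI d n (dIdx d n x), g t

/-- The real-valued version of the conditional expectation `E_n`. -/
def condExpDR (d : ℕ) (n : ℤ) (g : ℝ → ℝ) : ℝ → ℝ :=
  fun x => ((d : ℝ) ^ n) * ∫ t in dyadicI d n (dIdx d n x), g t

/-- Martingale difference `d_n g = E_n g - E_{n-1} g`. -/
def mdiff (d : ℕ) (n : ℤ) (g : ℝ → ℂ) : ℝ → ℂ :=
  fun x => condExpD d n g x - condExpD d (n - 1) g x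

/-- The average `(1/m(I)) ∫_I g` over `I = I_{n,k}`. -/
def avgI (d : ℕ) (n k : ℤ) (g : ℝ → ℂ) : ℂ :=
  ((d : ℂ) ^ n) * ∫ t in dyadicI d n k, g t

/-- The BMO ratio `((1/m(I)) ∫_I |b - avg_I b|² dm)^{1/2}` for `I = I_{n,k}`. -/
def bmoRatio (d : ℕ) (b : ℝ → ℂ) (n k : ℤ) : ℝ :=
  Real.sqrt (((d : ℝ) ^ n) * ∫ x in dyadicI d n k, ‖b x - avgI d n k b‖ ^ 2)

/-- The `d`-adic BMO norm. -/
def bmoNorm (d : ℕ) (b : ℝ → ℂ) : ℝ :=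
  ⨆ q : ℤ × ℤ, bmoRatio d b q.1 q.2

/-- Membership in `BMO^d(ℝ)`. -/
def MemBMOd (d : ℕ) (b : ℝ → ℂ) : Prop :=
  MeasureTheory.LocallyIntegrable b volume ∧
    BddAbove (Set.range fun q : ℤ × ℤ => bmoRatio d b q.1 q.2)

end

noncomputable section

/-- The Haar function `h_I^i` for `I = I_{n,k}`: for `1 ≤ i ≤ d-1`,
`h_I^i = d^{n/2} ∑_{j=0}^{d-1} ω^{i(j+1)} 1_{I_{n+1, kd+j}}` with `ω = exp(2πi/d)`. -/
def haar (d : ℕ) (n k : ℤ) (i : ℕ) : ℝ → ℂ :=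
  fun x => (Real.sqrt ((d : ℝ) ^ n) : ℂ) *
    ∑ j ∈ Finset.range d,
      Complex.exp (2 * (Real.pi : ℂ) * Complex.I / (d : ℂ)) ^ (i * (j + 1)) *
        (dyadicI d (n + 1) (k * d + j)).indicator (fun _ => (1 : ℂ)) x

/-- A finite Haar polynomial: a finite ℂ-linear combination of Haar functions `h_I^i`
with `I ∈ 𝒟`, `1 ≤ i ≤ d-1`. -/
def IsHaarPoly (d : ℕ) (g : ℝ → ℂ) : Prop :=
  ∃ (s : Finset (ℤ × ℤ × ℕ)) (c : ℤ × ℤ × ℕ → ℂ),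
    (∀ q ∈ s, 1 ≤ q.2.2 ∧ q.2.2 ≤ d - 1) ∧
    g = fun x => ∑ q ∈ s, c q * haar d q.1 q.2.1 q.2.2 x

/-- The paraproduct `π_b(f) = ∑_k d_k b · f_{k-1}`. -/
def piOp (d : ℕ) (b f : ℝ → ℂ) : ℝ → ℂ :=
  fun x => ∑' k : ℤ, mdiff d k b x * condExpD d (k - 1) f x

/-- The diagonal paraproduct `Λ_b(f) = ∑_k d_k b · d_k f`. -/
def lamOp (d : ℕ) (b f : ℝ → ℂ) : ℝ → ℂ :=
  fun x => ∑' k : ℤ, mdiff d k b x * mdiff d k f x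

/-- The third paraproduct `R_b(f) = ∑_k b_{k-1} · d_k f`. -/
def rOp (d : ℕ) (b f : ℝ → ℂ) : ℝ → ℂ :=
  fun x => ∑' k : ℤ, condExpD d (k - 1) b x * mdiff d k f x

/-- The operator `V_{a,b}(f) = ∑_k d_k a · E_{k-1}(∑_{j ≥ k} d_j b · d_j f)`. -/
def vOp (d : ℕ) (a b f : ℝ → ℂ) : ℝ → ℂ :=
  fun x => ∑' k : ℤ, mdiff d k a x *
    condExpD d (k - 1)
      (fun t => ∑' j : ℤ, if k ≤ j then mdiff d j b t * mdiff d j f t else 0) x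

end


noncomputable section
namespace CZ

variable {d : ℕ}

lemma dpos (hd : 2 ≤ d) : (0:ℝ) < (d:ℝ) := by
  have : (2:ℝ) ≤ (d:ℝ) := by exact_mod_cast hd
  linarith

lemma dzpow_pos (hd : 2 ≤ d) (n : ℤ) : (0:ℝ) < (d:ℝ) ^ n := zpow_pos (dpos hd) n

lemma mem_iff (hd : 2 ≤ d) {n k : ℤ} {x : ℝ} :
    x ∈ dyadicI d n k ↔ dIdx d n x = k := by
  have hdp : (0:ℝ) < (d:ℝ) ^ n := dzpow_pos hd n
  have h1 : (d:ℝ) ^ (-n) = ((d:ℝ) ^ n)⁻¹ := zpow_neg _ _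
  rw [dyadicI, dIdx, Set.mem_Ico, h1, ← div_eq_mul_inv, ← div_eq_mul_inv,
    div_le_iff₀ hdp, lt_div_iff₀ hdp, Int.floor_eq_iff]

lemma self_mem (hd : 2 ≤ d) (n : ℤ) (x : ℝ) : x ∈ dyadicI d n (dIdx d n x) :=
  (mem_iff hd).2 rfl

/-- The left endpoint of `I_{n,k}`. -/
def lp (d : ℕ) (n k : ℤ) : ℝ := (k : ℝ) * (d : ℝ) ^ (-n)

lemma lp_mem (hd : 2 ≤ d) (n k : ℤ) : lp d n k ∈ dyadicI d n k := by
  have hdp : (0:ℝ) < (d:ℝ) ^ (-n) := dzpow_pos hd (-n)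
  constructor
  · exact le_refl _
  · have : (k:ℝ) < (k:ℝ) + 1 := by linarith
    exact mul_lt_mul_of_pos_right this hdp

lemma dIdx_lp (hd : 2 ≤ d) (n k : ℤ) : dIdx d n (lp d n k) = k :=
  (mem_iff hd).1 (lp_mem hd n k)

/-- Nesting: each interval of generation `n` is contained in the generation-`m`
interval of its left endpoint, for `m ≤ n`. -/
lemma subset_lp (hd : 2 ≤ d) {m n : ℤ} (hmn : m ≤ n) (k : ℤ) :
    dyadicI d n k ⊆ dyadicI d m (dIdx d m (lp d n k)) := by
  set q := dIdx d m (lp d n k) with hq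
  have hql : lp d m q ≤ lp d n k ∧ lp d n k < ((q:ℝ)+1) * (d:ℝ) ^ (-m) := by
    have := self_mem hd m (lp d n k)
    exact ⟨this.1, this.2⟩
  have hun : (0:ℝ) < (d:ℝ) ^ (-n) := dzpow_pos hd (-n)
  -- D = d^(n-m) as a natural power, (D:ℝ) = d^(n-m)
  set D : ℤ := (d:ℤ) ^ (n - m).toNat with hD
  have hDR : (D:ℝ) = (d:ℝ) ^ (n - m) := by
    rw [hD]
    push_cast
    rw [← zpow_natCast, Int.toNat_of_nonneg (by linarith)]
  have hv : (d:ℝ) ^ (-m) = (D:ℝ) * (d:ℝ) ^ (-n) := by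
    rw [hDR, ← zpow_add₀ (ne_of_gt (dpos hd))]
    ring_nf
  intro x hx
  have hx1 : (k:ℝ) * (d:ℝ) ^ (-n) ≤ x := hx.1
  have hx2 : x < ((k:ℝ) + 1) * (d:ℝ) ^ (-n) := hx.2
  constructor
  · -- q * d^{-m} ≤ k*d^{-n} ≤ x
    calc (q:ℝ) * (d:ℝ) ^ (-m) ≤ (k:ℝ) * (d:ℝ) ^ (-n) := hql.1
    _ ≤ x := hx1
  · -- x < (k+1) d^{-n} ≤ (q+1) d^{-m}
    have hk1 : (k:ℝ) * (d:ℝ)^(-n) < ((q:ℝ)+1) * ((D:ℝ) * (d:ℝ)^(-n)) := by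
      rw [← hv]; exact hql.2
    have hkD : (k:ℝ) < ((q:ℝ)+1) * (D:ℝ) := by
      rw [← mul_assoc] at hk1
      exact lt_of_mul_lt_mul_right hk1 hun.le
    have hkDz : k < (q + 1) * D := by exact_mod_cast hkD
    have hkDz' : k + 1 ≤ (q + 1) * D := hkDz
    have : ((k:ℝ) + 1) ≤ ((q:ℝ) + 1) * (D:ℝ) := by exact_mod_cast hkDz'
    calc x < ((k:ℝ)+1) * (d:ℝ)^(-n) := hx2
    _ ≤ ((q:ℝ)+1) * (D:ℝ) * (d:ℝ)^(-n) := by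
        apply mul_le_mul_of_nonneg_right this (le_of_lt hun)
    _ = ((q:ℝ)+1) * (d:ℝ)^(-m) := by rw [hv]; ring

/-- Constancy of `dIdx m` on intervals of generation `n ≥ m`. -/
lemma dIdx_const (hd : 2 ≤ d) {m n : ℤ} (hmn : m ≤ n) {k : ℤ} {x y : ℝ}
    (hx : x ∈ dyadicI d n k) (hy : y ∈ dyadicI d n k) :
    dIdx d m x = dIdx d m y := by
  have h1 := (mem_iff hd).1 (subset_lp hd hmn k hx)
  have h2 := (mem_iff hd).1 (subset_lp hd hmn k hy)
  rw [h1, h2]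

lemma measurableSet_dyadicI (d : ℕ) (n k : ℤ) : MeasurableSet (dyadicI d n k) :=
  measurableSet_Ico

lemma volume_dyadicI (d : ℕ) (n k : ℤ) :
    volume (dyadicI d n k) = ENNReal.ofReal ((d:ℝ) ^ (-n)) := by
  rw [dyadicI, Real.volume_Ico]
  congr 1
  ring

lemma volume_toReal (hd : 2 ≤ d) (n k : ℤ) :
    (volume (dyadicI d n k)).toReal = (d:ℝ) ^ (-n) := by
  rw [volume_dyadicI, ENNReal.toReal_ofReal (le_of_lt (dzpow_pos hd (-n)))]

/-- step functions at level m: functions constant on generation-m intervals. -/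
def Step (d : ℕ) (m : ℤ) (g : ℝ → ℂ) : Prop :=
  ∀ x t : ℝ, dIdx d m t = dIdx d m x → g t = g x

lemma Step.mono (hd : 2 ≤ d) {m n : ℤ} (hmn : m ≤ n) {g : ℝ → ℂ}
    (hg : Step d m g) : Step d n g := by
  intro x t ht
  apply hg
  have hx : x ∈ dyadicI d n (dIdx d n x) := self_mem hd n x
  have ht' : t ∈ dyadicI d n (dIdx d n x) := by rw [← ht]; exact self_mem hd n t
  exact dIdx_const hd hmn ht' hx

lemma step_condExpD (d : ℕ) (m : ℤ) (g : ℝ → ℂ) : Step d m (condExpD d m g) := by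
  intro x t ht
  simp only [condExpD, ht]

lemma indicator_eq_ite (hd : 2 ≤ d) (n k : ℤ) (x : ℝ) :
    (dyadicI d n k).indicator (fun _ => (1:ℂ)) x = if dIdx d n x = k then 1 else 0 := by
  by_cases h : dIdx d n x = k
  · rw [Set.indicator_of_mem ((mem_iff hd).2 h), if_pos h]
  · rw [Set.indicator_of_notMem (fun hx => h ((mem_iff hd).1 hx)), if_neg h]

lemma step_indicator (hd : 2 ≤ d) {m n : ℤ} (hnm : n ≤ m) (k : ℤ) :
    Step d m ((dyadicI d n k).indicator (fun _ => (1:ℂ))) := by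
  apply Step.mono hd hnm
  intro x t ht
  rw [indicator_eq_ite hd, indicator_eq_ite hd, ht]

lemma Step.mul {m : ℤ} {g h : ℝ → ℂ} (hg : Step d m g) (hh : Step d m h) :
    Step d m (fun x => g x * h x) := fun x t ht => by
  simp only []
  rw [hg x t ht, hh x t ht]

lemma step_mdiff (hd : 2 ≤ d) (k : ℤ) (g : ℝ → ℂ) : Step d k (mdiff d k g) := by
  intro x t ht
  have h1 := step_condExpD d k g x t ht
  have h2 := (Step.mono hd (by omega) (step_condExpD d (k-1) g)) x t ht
  simp only [mdiff, h1, h2]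


/-- powers of d in ℂ -/
lemma dC_ne (hd : 2 ≤ d) : (d:ℂ) ≠ 0 := by
  simp only [ne_eq, Nat.cast_eq_zero]; omega

lemma dC_zpow (hd : 2 ≤ d) (m : ℤ) : (((d:ℝ) ^ m : ℝ) : ℂ) = (d:ℂ) ^ m := by
  push_cast
  ring

/-- `E_m g = g` for step functions at level `m`. -/
lemma condExpD_of_step (hd : 2 ≤ d) {m : ℤ} {g : ℝ → ℂ} (hg : Step d m g) :
    condExpD d m g = g := by
  funext x
  have hcong : ∫ t in dyadicI d m (dIdx d m x), g t
      = ∫ _t in dyadicI d m (dIdx d m x), g x := by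
    apply setIntegral_congr_fun (measurableSet_dyadicI d m _)
    intro t ht
    exact hg x t ((mem_iff hd).1 ht)
  rw [condExpD, hcong, setIntegral_const, measureReal_def, volume_toReal hd, Complex.real_smul, dC_zpow hd,
    ← mul_assoc, ← zpow_add₀ (dC_ne hd)]
  simp

/-- pull-out of a step factor. -/
lemma condExpD_mul_step (hd : 2 ≤ d) {m : ℤ} {g : ℝ → ℂ} (hg : Step d m g)
    (h : ℝ → ℂ) :
    condExpD d m (fun t => g t * h t) = fun x => g x * condExpD d m h x := by
  funext x
  have hcong : ∫ t in dyadicI d m (dIdx d m x), g t * h t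
      = ∫ t in dyadicI d m (dIdx d m x), g x * h t := by
    apply setIntegral_congr_fun (measurableSet_dyadicI d m _)
    intro t ht
    show g t * h t = g x * h t
    rw [hg x t ((mem_iff hd).1 ht)]
  rw [condExpD, hcong, integral_const_mul]
  simp only [condExpD]
  ring

/-- linearity lemmas -/
lemma condExpD_add {g h : ℝ → ℂ} (hg : Integrable g) (hh : Integrable h) (m : ℤ) :
    condExpD d m (fun t => g t + h t) = fun x => condExpD d m g x + condExpD d m h x := by
  funext x
  rw [condExpD, integral_add hg.integrableOn hh.integrableOn]
  simp only [condExpD]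
  ring

lemma condExpD_const_mul (c : ℂ) (g : ℝ → ℂ) (m : ℤ) :
    condExpD d m (fun t => c * g t) = fun x => c * condExpD d m g x := by
  funext x
  rw [condExpD, integral_const_mul]
  simp only [condExpD]
  ring

lemma condExpD_zero (m : ℤ) : condExpD d m (fun _ => (0:ℂ)) = fun _ => 0 := by
  funext x
  simp [condExpD]

lemma condExpD_zero' (m : ℤ) : condExpD d m (0 : ℝ → ℂ) = 0 := by
  funext x
  simp [condExpD]

lemma condExpD_finset_sum {ι : Type*} (s : Finset ι) (F : ι → ℝ → ℂ)
    (hF : ∀ i ∈ s, Integrable (F i)) (m : ℤ) :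
    condExpD d m (fun t => ∑ i ∈ s, F i t) =
      fun x => ∑ i ∈ s, condExpD d m (F i) x := by
  funext x
  rw [condExpD, integral_finset_sum _ (fun i hi => (hF i hi).integrableOn),
    Finset.mul_sum]
  rfl

lemma condExpD_sub {g h : ℝ → ℂ} (hg : Integrable g) (hh : Integrable h) (m : ℤ) :
    condExpD d m (fun t => g t - h t) = fun x => condExpD d m g x - condExpD d m h x := by
  funext x
  rw [condExpD, integral_sub hg.integrableOn hh.integrableOn]
  simp only [condExpD]
  ring

/-- integrability of indicators -/
lemma integrable_indicator_dyadic (d : ℕ) (n k : ℤ) :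
    Integrable ((dyadicI d n k).indicator (fun _ => (1:ℂ))) := by
  apply IntegrableOn.integrable_indicator _ (measurableSet_dyadicI d n k)
  exact integrableOn_const (by rw [volume_dyadicI]; exact ENNReal.ofReal_ne_top)

/-- Dyadic simple functions: the span of indicators of dyadic intervals. -/
def DS (d : ℕ) (g : ℝ → ℂ) : Prop :=
  g ∈ Submodule.span ℂ
    {h : ℝ → ℂ | ∃ n k : ℤ, h = (dyadicI d n k).indicator (fun _ => (1:ℂ))}

lemma DS.integrable {g : ℝ → ℂ} (hg : DS d g) : Integrable g := by
  induction hg using Submodule.span_induction with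
  | mem h hh => obtain ⟨n, k, rfl⟩ := hh; exact integrable_indicator_dyadic d n k
  | zero => exact integrable_zero _ _ _
  | add u v _ _ hu hv => exact hu.add hv
  | smul c u _ hu => exact hu.smul c

lemma DS.add {g h : ℝ → ℂ} (hg : DS d g) (hh : DS d h) : DS d (fun x => g x + h x) :=
  Submodule.add_mem _ hg hh

lemma DS.sub {g h : ℝ → ℂ} (hg : DS d g) (hh : DS d h) : DS d (fun x => g x - h x) :=
  Submodule.sub_mem _ hg hh

lemma DS.const_mul {g : ℝ → ℂ} (hg : DS d g) (c : ℂ) : DS d (fun x => c * g x) :=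
  Submodule.smul_mem _ c hg

lemma DS.zero : DS d (fun _ => (0:ℂ)) := Submodule.zero_mem _

lemma DS.of_eq {g h : ℝ → ℂ} (hg : DS d g) (he : ∀ x, h x = g x) : DS d h := by
  have : h = g := funext he
  rw [this]; exact hg

lemma DS.sum {ι : Type*} (s : Finset ι) (F : ι → ℝ → ℂ) (hF : ∀ i ∈ s, DS d (F i)) :
    DS d (fun x => ∑ i ∈ s, F i x) := by
  classical
  induction s using Finset.induction with
  | empty => exact DS.zero.of_eq (by simp)
  | insert i s' hni ih =>
    have := (hF i (Finset.mem_insert_self i s')).add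
      (ih (fun j hj => hF j (Finset.mem_insert_of_mem hj)))
    exact this.of_eq (fun x => by rw [Finset.sum_insert hni])

lemma DS.indicator (n k : ℤ) : DS d ((dyadicI d n k).indicator (fun _ => (1:ℂ))) :=
  Submodule.subset_span ⟨n, k, rfl⟩

/-- product of two dyadic indicators is a dyadic simple function -/
lemma indicator_mul_indicator (hd : 2 ≤ d) {m n : ℤ} (hmn : m ≤ n) (j k : ℤ) :
    DS d (fun x => (dyadicI d m j).indicator (fun _ => (1:ℂ)) x *
      (dyadicI d n k).indicator (fun _ => (1:ℂ)) x) := by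
  by_cases hjq : j = dIdx d m (lp d n k)
  · apply (DS.indicator n k).of_eq
    intro x
    by_cases hx : x ∈ dyadicI d n k
    · have hx' : x ∈ dyadicI d m j := by
        rw [hjq]; exact subset_lp hd hmn k hx
      rw [Set.indicator_of_mem hx, Set.indicator_of_mem hx', one_mul]
    · rw [Set.indicator_of_notMem hx, mul_zero]
  · apply DS.zero.of_eq
    intro x
    by_cases hx : x ∈ dyadicI d n k
    · have hx' : x ∉ dyadicI d m j := by
        intro hmem
        exact hjq (((mem_iff hd).1 hmem).symm.trans ((mem_iff hd).1 (subset_lp hd hmn k hx)))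
      rw [Set.indicator_of_notMem hx', zero_mul]
    · rw [Set.indicator_of_notMem hx, mul_zero]

lemma DS.mul {g h : ℝ → ℂ} (hg : DS d g) (hh : DS d h) (hd : 2 ≤ d) :
    DS d (fun x => g x * h x) := by
  induction hg using Submodule.span_induction with
  | mem u hu =>
    obtain ⟨n, k, rfl⟩ := hu
    induction hh using Submodule.span_induction with
    | mem v hv =>
      obtain ⟨n', k', rfl⟩ := hv
      rcases le_total n n' with h | h
      · exact indicator_mul_indicator hd h k k'
      · exact (indicator_mul_indicator hd h k' k).of_eq (fun x => mul_comm _ _)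
    | zero => exact DS.zero.of_eq (by intro x; simp)
    | add u' v' _ _ hu' hv' => exact (hu'.add hv').of_eq (by intro x; simp only [Pi.add_apply]; ring)
    | smul c u' _ hu' => exact (hu'.const_mul c).of_eq (by intro x; simp only [Pi.smul_apply, smul_eq_mul]; ring)
  | zero => exact DS.zero.of_eq (by intro x; simp)
  | add u v _ _ hu hv => exact (hu.add hv).of_eq (by intro x; simp only [Pi.add_apply]; ring)
  | smul c u _ hu => exact (hu.const_mul c).of_eq (by intro x; simp only [Pi.smul_apply, smul_eq_mul]; ring)


/-- Projection formula for indicators, `m ≤ n`. -/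
lemma condExpD_indicator_le (hd : 2 ≤ d) {m n : ℤ} (hmn : m ≤ n) (k : ℤ) :
    condExpD d m ((dyadicI d n k).indicator (fun _ => (1:ℂ))) =
      fun x => ((d:ℂ) ^ (m - n)) *
        (dyadicI d m (dIdx d m (lp d n k))).indicator (fun _ => (1:ℂ)) x := by
  funext x
  set q := dIdx d m (lp d n k) with hqdef
  rw [condExpD, setIntegral_indicator (measurableSet_dyadicI d n k)]
  by_cases hx : dIdx d m x = q
  · have hsub : dyadicI d n k ⊆ dyadicI d m (dIdx d m x) := by
      rw [hx]; exact subset_lp hd hmn k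
    rw [Set.inter_eq_self_of_subset_right hsub, setIntegral_const, measureReal_def,
      volume_toReal hd, Complex.real_smul, dC_zpow hd,
      Set.indicator_of_mem ((mem_iff hd).2 hx), mul_one, mul_one,
      ← zpow_add₀ (dC_ne hd), sub_eq_add_neg]
  · have hempty : dyadicI d m (dIdx d m x) ∩ dyadicI d n k = ∅ := by
      rw [Set.eq_empty_iff_forall_notMem]
      rintro t ⟨ht1, ht2⟩
      apply hx
      rw [← (mem_iff hd).1 ht1]
      exact dIdx_const hd hmn ht2 (lp_mem hd n k)
    rw [hempty, Set.indicator_of_notMem (fun hmem => hx ((mem_iff hd).1 hmem))]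
    simp

/-- `E_m` maps dyadic simple functions to dyadic simple functions. -/
lemma DS.condExpD {g : ℝ → ℂ} (hg : DS d g) (hd : 2 ≤ d) (m : ℤ) :
    DS d (condExpD d m g) := by
  induction hg using Submodule.span_induction with
  | mem u hu =>
    obtain ⟨N, K, rfl⟩ := hu
    rcases le_total N m with h | h
    · rw [condExpD_of_step hd (step_indicator hd h K)]
      exact DS.indicator N K
    · rw [condExpD_indicator_le hd h K]
      exact (DS.indicator m _).const_mul _
  | zero =>
    exact DS.zero.of_eq (fun x => by simp [_root_.condExpD])
  | add u v hu hv ihu ihv =>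
    refine (ihu.add ihv).of_eq (fun x => ?_)
    exact congrFun (condExpD_add (DS.integrable hu) (DS.integrable hv) m) x
  | smul c u hu ihu =>
    refine (ihu.const_mul c).of_eq (fun x => ?_)
    exact congrFun (condExpD_const_mul c u m) x

/-- Tower property for dyadic simple functions. -/
lemma tower (hd : 2 ≤ d) {m n : ℤ} (hmn : m ≤ n) {g : ℝ → ℂ} (hg : DS d g) :
    condExpD d m (condExpD d n g) = condExpD d m g := by
  induction hg using Submodule.span_induction with
  | mem u hu =>
    obtain ⟨N, K, rfl⟩ := hu
    rcases le_total N n with h | h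
    · rw [condExpD_of_step hd (step_indicator hd h K)]
    · rw [condExpD_indicator_le hd h K]
      set q1 := dIdx d n (lp d N K) with hq1
      rw [condExpD_const_mul, condExpD_indicator_le hd hmn q1,
        condExpD_indicator_le hd (hmn.trans h) K]
      have hidx : dIdx d m (lp d n q1) = dIdx d m (lp d N K) := by
        have h1 : lp d n q1 ∈ dyadicI d n q1 := lp_mem hd n q1
        have h2 : lp d N K ∈ dyadicI d n q1 := subset_lp hd h K (lp_mem hd N K)
        exact dIdx_const hd hmn h1 h2
      funext x
      rw [hidx, ← mul_assoc, ← zpow_add₀ (dC_ne hd)]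
      congr 2
      ring
  | zero =>
    have h0 : _root_.condExpD d n (0 : ℝ → ℂ) = (fun _ => (0:ℂ)) := by
      funext x; simp [_root_.condExpD]
    rw [h0]
    have h1 : _root_.condExpD d m (fun _ => (0:ℂ)) = (fun _ => (0:ℂ)) := condExpD_zero m
    rw [h1]
    funext x; simp [_root_.condExpD]
  | add u v hu hv ihu ihv =>
    have h1 : _root_.condExpD d n (u + v) =
        fun x => _root_.condExpD d n u x + _root_.condExpD d n v x :=
      condExpD_add (DS.integrable hu) (DS.integrable hv) n
    rw [h1, condExpD_add ((DS.condExpD hu hd n).integrable) ((DS.condExpD hv hd n).integrable) m]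
    have h2 : _root_.condExpD d m (u + v) =
        fun x => _root_.condExpD d m u x + _root_.condExpD d m v x :=
      condExpD_add (DS.integrable hu) (DS.integrable hv) m
    rw [h2, ihu, ihv]
  | smul c u hu ihu =>
    have h1 : _root_.condExpD d n (c • u) =
        fun x => c * _root_.condExpD d n u x := condExpD_const_mul c u n
    rw [h1, condExpD_const_mul]
    have h2 : _root_.condExpD d m (c • u) =
        fun x => c * _root_.condExpD d m u x := condExpD_const_mul c u m
    rw [h2, ihu]

lemma DS.mdiff {g : ℝ → ℂ} (hg : DS d g) (hd : 2 ≤ d) (j : ℤ) :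
    DS d (_root_.mdiff d j g) :=
  ((hg.condExpD hd j).sub (hg.condExpD hd (j-1))).of_eq (fun x => rfl)

/-- `E_m (d_j g) = 0` for `m ≤ j - 1`. -/
lemma condExpD_mdiff (hd : 2 ≤ d) {g : ℝ → ℂ} (hg : DS d g) {j m : ℤ} (hm : m ≤ j - 1) :
    condExpD d m (_root_.mdiff d j g) = fun _ => 0 := by
  have h1 : _root_.mdiff d j g =
      fun t => condExpD d j g t - condExpD d (j-1) g t := rfl
  rw [h1, condExpD_sub ((hg.condExpD hd j).integrable) ((hg.condExpD hd (j-1)).integrable),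
    tower hd (by omega) hg, tower hd hm hg]
  funext x; simp

/-- Central vanishing: `E_m (u · d_j w) = 0` for `m ≤ j-1` and `u` a step function
of level `j-1`. -/
lemma condExpD_step_mul_mdiff (hd : 2 ≤ d) {m j : ℤ} (hm : m ≤ j - 1)
    {u w : ℝ → ℂ} (hus : Step d (j-1) u) (hu : DS d u) (hw : DS d w) :
    condExpD d m (fun t => u t * _root_.mdiff d j w t) = fun _ => 0 := by
  have hX : DS d (fun t => u t * _root_.mdiff d j w t) :=
    hu.mul (hw.mdiff hd j) hd
  rw [← tower hd hm hX, condExpD_mul_step hd hus, condExpD_mdiff hd hw (le_refl (j-1))]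
  have h0 : (fun x => u x * (fun _ => (0:ℂ)) x) = (fun _ => (0:ℂ)) := by
    funext x; simp
  rw [h0]
  exact condExpD_zero m

----------------------------------------------------------------
-- Haar facts

lemma haar_eq_sum (d : ℕ) (n k : ℤ) (i : ℕ) :
    haar d n k i = fun x => ∑ j ∈ Finset.range d,
      ((Real.sqrt ((d : ℝ) ^ n) : ℂ) *
        Complex.exp (2 * (Real.pi : ℂ) * Complex.I / (d : ℂ)) ^ (i * (j + 1))) *
        (dyadicI d (n + 1) (k * d + j)).indicator (fun _ => (1 : ℂ)) x := by
  funext x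
  rw [haar, Finset.mul_sum]
  apply Finset.sum_congr rfl
  intro j _
  ring

lemma DS_haar (d : ℕ) (n k : ℤ) (i : ℕ) : DS d (haar d n k i) := by
  rw [haar_eq_sum]
  exact DS.sum _ _ (fun j _ => (DS.indicator (n+1) (k*d+j)).const_mul _)

lemma step_haar (hd : 2 ≤ d) (n k : ℤ) (i : ℕ) : Step d (n+1) (haar d n k i) := by
  intro x t ht
  rw [haar, haar]
  congr 1
  apply Finset.sum_congr rfl
  intro j _
  congr 1
  exact step_indicator hd (le_refl (n+1)) (k*d+j) x t ht

lemma rootsum (hd : 2 ≤ d) {i : ℕ} (hi1 : 1 ≤ i) (hi2 : i ≤ d - 1) :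
    ∑ j ∈ Finset.range d,
      Complex.exp (2 * (Real.pi : ℂ) * Complex.I / (d : ℂ)) ^ (i * (j + 1)) = 0 := by
  set ω := Complex.exp (2 * (Real.pi : ℂ) * Complex.I / (d : ℂ)) with hω
  have hprim : IsPrimitiveRoot ω d := Complex.isPrimitiveRoot_exp d (by omega)
  have hζ1 : ω ^ i ≠ 1 := hprim.pow_ne_one_of_pos_of_lt (by omega) (by omega)
  have hζd : (ω ^ i) ^ d = 1 := by
    rw [← pow_mul, mul_comm, pow_mul, hprim.pow_eq_one, one_pow]
  calc ∑ j ∈ Finset.range d, ω ^ (i * (j + 1))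
      = ∑ j ∈ Finset.range d, (ω ^ i) ^ j * ω ^ i := by
        apply Finset.sum_congr rfl
        intro j _
        rw [pow_mul, pow_succ]
    _ = (∑ j ∈ Finset.range d, (ω ^ i) ^ j) * ω ^ i := (Finset.sum_mul _ _ _).symm
    _ = 0 := by rw [geom_sum_eq hζ1, hζd, sub_self, zero_div, zero_mul]

lemma lp_child_mem (hd : 2 ≤ d) (n k : ℤ) {j : ℕ} (hj : j < d) :
    lp d (n+1) (k * d + j) ∈ dyadicI d n k := by
  have hpos : (0:ℝ) < (d:ℝ) ^ (-(n+1)) := dzpow_pos hd _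
  have hsplit : (d:ℝ) ^ (-n) = (d:ℝ) * (d:ℝ) ^ (-(n+1)) := by
    calc (d:ℝ) ^ (-n) = (d:ℝ) ^ ((1:ℤ) + (-(n+1))) := by congr 1; ring
    _ = (d:ℝ) ^ (1:ℤ) * (d:ℝ) ^ (-(n+1)) := zpow_add₀ (ne_of_gt (dpos hd)) _ _
    _ = (d:ℝ) * (d:ℝ) ^ (-(n+1)) := by rw [zpow_one]
  constructor
  · rw [lp, hsplit]
    push_cast
    rw [← mul_assoc]
    apply mul_le_mul_of_nonneg_right _ (le_of_lt hpos)
    have : (0:ℝ) ≤ (j:ℝ) := by positivity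
    linarith
  · rw [lp, hsplit]
    push_cast
    rw [← mul_assoc]
    apply mul_lt_mul_of_pos_right _ hpos
    have : (j:ℝ) < (d:ℝ) := by exact_mod_cast hj
    linarith

lemma condExpD_haar_self (hd : 2 ≤ d) (n k : ℤ) {i : ℕ} (hi1 : 1 ≤ i) (hi2 : i ≤ d - 1) :
    condExpD d n (haar d n k i) = fun _ => 0 := by
  rw [haar_eq_sum,
    condExpD_finset_sum (Finset.range d) _
      (fun (j : ℕ) _ => (integrable_indicator_dyadic d (n+1) (k*d+(j:ℤ))).const_mul _) n]
  funext x
  have hterm : ∀ j ∈ Finset.range d,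
      condExpD d n (fun t => ((Real.sqrt ((d : ℝ) ^ n) : ℂ) *
        Complex.exp (2 * (Real.pi : ℂ) * Complex.I / (d : ℂ)) ^ (i * (j + 1))) *
        (dyadicI d (n + 1) (k * d + j)).indicator (fun _ => (1 : ℂ)) t) x =
      Complex.exp (2 * (Real.pi : ℂ) * Complex.I / (d : ℂ)) ^ (i * (j + 1)) *
        ((Real.sqrt ((d : ℝ) ^ n) : ℂ) * ((d:ℂ) ^ ((n : ℤ) - (n+1)) *
          (dyadicI d n k).indicator (fun _ => (1 : ℂ)) x)) := by
    intro j hj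
    rw [condExpD_const_mul]
    have hidx : dIdx d n (lp d (n+1) (k * d + j)) = k :=
      (mem_iff hd).1 (lp_child_mem hd n k (Finset.mem_range.1 hj))
    rw [condExpD_indicator_le hd (by omega) (k*d+j)]
    simp only [hidx]
    ring
  rw [Finset.sum_congr rfl hterm, ← Finset.sum_mul, rootsum hd hi1 hi2, zero_mul]

lemma condExpD_haar_le (hd : 2 ≤ d) {m n : ℤ} (k : ℤ) {i : ℕ} (hi1 : 1 ≤ i)
    (hi2 : i ≤ d - 1) (hmn : m ≤ n) :
    condExpD d m (haar d n k i) = fun _ => 0 := by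
  rw [← tower hd hmn (DS_haar d n k i), condExpD_haar_self hd n k hi1 hi2]
  exact condExpD_zero m

lemma condExpD_haar_ge (hd : 2 ≤ d) {m n : ℤ} (k : ℤ) (i : ℕ) (hm : n + 1 ≤ m) :
    condExpD d m (haar d n k i) = haar d n k i :=
  condExpD_of_step hd (Step.mono hd hm (step_haar hd n k i))

/-- Structure of a finite Haar polynomial. -/
lemma haarPoly_struct (hd : 2 ≤ d) {g : ℝ → ℂ} (hg : IsHaarPoly d g) :
    DS d g ∧ ∃ lo hi : ℤ, lo ≤ hi ∧
      (∀ m, m ≤ lo → condExpD d m g = fun _ => 0) ∧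
      (∀ m, hi ≤ m → condExpD d m g = g) := by
  obtain ⟨s, c, hs, rfl⟩ := hg
  have hDS : DS d (fun x => ∑ q ∈ s, c q * haar d q.1 q.2.1 q.2.2 x) :=
    DS.sum _ _ (fun q _ => (DS_haar d q.1 q.2.1 q.2.2).const_mul (c q))
  refine ⟨hDS, ?_⟩
  have hint : ∀ q ∈ s, Integrable (fun x => c q * haar d q.1 q.2.1 q.2.2 x) :=
    fun q hq => ((DS_haar d q.1 q.2.1 q.2.2).const_mul (c q)).integrable
  rcases Finset.eq_empty_or_nonempty s with hse | hne
  · subst hse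
    refine ⟨0, 0, le_refl _, ?_, ?_⟩
    · intro m _
      have : (fun x => ∑ q ∈ (∅ : Finset (ℤ × ℤ × ℕ)), c q * haar d q.1 q.2.1 q.2.2 x)
          = fun _ => (0:ℂ) := by funext x; simp
      rw [this]
      exact condExpD_zero m
    · intro m _
      have : (fun x => ∑ q ∈ (∅ : Finset (ℤ × ℤ × ℕ)), c q * haar d q.1 q.2.1 q.2.2 x)
          = fun _ => (0:ℂ) := by funext x; simp
      rw [this]
      exact condExpD_zero m
  · refine ⟨s.inf' hne (fun q => q.1), s.sup' hne (fun q => q.1) + 1, ?_, ?_, ?_⟩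
    · obtain ⟨q, hq⟩ := hne
      have h1 := Finset.inf'_le (fun q => q.1) hq
      have h2 := Finset.le_sup' (fun q => q.1) hq
      omega
    · intro m hm
      rw [condExpD_finset_sum s _ hint m]
      funext x
      rw [Finset.sum_eq_zero]
      intro q hq
      rw [condExpD_const_mul,
        condExpD_haar_le hd q.2.1 (hs q hq).1 (hs q hq).2
          (le_trans hm (Finset.inf'_le (fun q => q.1) hq))]
      simp
    · intro m hm
      rw [condExpD_finset_sum s _ hint m]
      funext x
      apply Finset.sum_congr rfl
      intro q hq
      rw [condExpD_const_mul,
        condExpD_haar_ge hd q.2.1 q.2.2 (by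
          have := Finset.le_sup' (fun q => q.1) hq
          omega)]


/-- value-level: `E_m(E_{j-1}b · d_j f)(x)`. -/
lemma Emix1 (hd : 2 ≤ d) {b f : ℝ → ℂ} (hb : DS d b) (hf : DS d f)
    (j m : ℤ) (x : ℝ) :
    condExpD d m (fun t => condExpD d (j-1) b t * _root_.mdiff d j f t) x
      = if j ≤ m then condExpD d (j-1) b x * _root_.mdiff d j f x else 0 := by
  by_cases h : j ≤ m
  · rw [if_pos h, condExpD_of_step hd
      ((Step.mono hd (by omega) (step_condExpD d (j-1) b)).mul
        (Step.mono hd h (step_mdiff hd j f)))]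
  · rw [if_neg h, condExpD_step_mul_mdiff hd (by omega) (step_condExpD d (j-1) b)
      (hb.condExpD hd (j-1)) hf]

/-- value-level: `E_m(d_j a · E_{j-1}f)(x)`. -/
lemma Emix2 (hd : 2 ≤ d) {a f : ℝ → ℂ} (ha : DS d a) (hf : DS d f)
    (j m : ℤ) (x : ℝ) :
    condExpD d m (fun t => _root_.mdiff d j a t * condExpD d (j-1) f t) x
      = if j ≤ m then _root_.mdiff d j a x * condExpD d (j-1) f x else 0 := by
  by_cases h : j ≤ m
  · rw [if_pos h, condExpD_of_step hd
      ((Step.mono hd h (step_mdiff hd j a)).mul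
        (Step.mono hd (by omega) (step_condExpD d (j-1) f)))]
  · have hcomm : (fun t => _root_.mdiff d j a t * condExpD d (j-1) f t)
        = fun t => condExpD d (j-1) f t * _root_.mdiff d j a t :=
      funext fun t => mul_comm _ _
    rw [if_neg h, hcomm, condExpD_step_mul_mdiff hd (by omega)
      (step_condExpD d (j-1) f) (hf.condExpD hd (j-1)) ha]

/-- `E_m(d_j b · E_j f) = E_m(d_j b · d_j f)` for `m ≤ j-1`. -/
lemma Emix4 (hd : 2 ≤ d) {b f : ℝ → ℂ} (hb : DS d b) (hf : DS d f)
    {m j : ℤ} (hm : m ≤ j - 1) :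
    condExpD d m (fun t => _root_.mdiff d j b t * condExpD d j f t)
      = condExpD d m (fun t => _root_.mdiff d j b t * _root_.mdiff d j f t) := by
  have hsplit : (fun t => _root_.mdiff d j b t * condExpD d j f t) =
      fun t => (_root_.mdiff d j b t * _root_.mdiff d j f t) +
        (condExpD d (j-1) f t * _root_.mdiff d j b t) := by
    funext t
    simp only [_root_.mdiff]
    ring
  rw [hsplit, condExpD_add (((hb.mdiff hd j).mul (hf.mdiff hd j) hd).integrable)
      (((hf.condExpD hd (j-1)).mul (hb.mdiff hd j) hd).integrable) m,
    condExpD_step_mul_mdiff hd hm (step_condExpD d (j-1) f) (hf.condExpD hd (j-1)) hb]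
  funext x
  simp

lemma ite_sub_ite (j k : ℤ) (c : ℂ) :
    ((if j ≤ k then c else 0) - (if j ≤ k - 1 then c else 0)) = if j = k then c else 0 := by
  split_ifs <;> first | (exfalso; omega) | simp

lemma telescope (G : ℤ → ℂ) (m : ℤ) : ∀ M : ℤ, m ≤ M →
    ∑ j ∈ Finset.Icc (m+1) M, (G j - G (j-1)) = G M - G m := by
  refine Int.le_induction ?_ ?_
  · rw [show Finset.Icc (m+1) m = ∅ from Finset.Icc_eq_empty (by omega)]
    simp
  · intro M hM ih
    have hins : Finset.Icc (m+1) (M+1) = insert (M+1) (Finset.Icc (m+1) M) := by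
      ext t
      simp only [Finset.mem_Icc, Finset.mem_insert]
      omega
    rw [hins, Finset.sum_insert (by simp only [Finset.mem_Icc]; omega), ih]
    have h1 : M + 1 - 1 = M := by ring
    rw [h1]
    ring


end CZ
end

open CZ in
/-- The commutator identity
`[π_a, R_b](f) = -π_a(π_b(f) + Λ_b(f)) + V_{a,b}(f)` for finite Haar polynomials. -/
theorem commutator_pi_R_identity (d : ℕ) (hd : 2 ≤ d) (a b f : ℝ → ℂ)
    (ha : IsHaarPoly d a) (hb : IsHaarPoly d b) (hf : IsHaarPoly d f) :
    ∀ᵐ x ∂volume,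
      piOp d a (rOp d b f) x - rOp d b (piOp d a f) x =
        -(piOp d a (fun t => piOp d b f t + lamOp d b f t) x) + vOp d a b f x := by
  classical
  obtain ⟨haDS, loa, hia, haba, ha0, hatop⟩ := haarPoly_struct hd ha
  obtain ⟨hbDS, lob, hib, habb, hb0, hbtop⟩ := haarPoly_struct hd hb
  obtain ⟨hfDS, lof, hif, habf, hf0, hftop⟩ := haarPoly_struct hd hf
  set lo : ℤ := min loa (min lob lof) with hlodef
  set hi : ℤ := max hia (max hib hif) with hhidef
  set S : Finset ℤ := Finset.Icc (lo+1) hi with hSdef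
  -- vanishing of martingale differences outside S
  have hmd : ∀ (g : ℝ → ℂ) (lg hg : ℤ), (∀ m, m ≤ lg → condExpD d m g = fun _ => 0) →
      (∀ m, hg ≤ m → condExpD d m g = g) → lo ≤ lg → hg ≤ hi →
      ∀ k : ℤ, k ∉ S → ∀ x, _root_.mdiff d k g x = 0 := by
    intro g lg hg h0 htop hl hh k hk x
    rw [hSdef, Finset.mem_Icc, not_and_or] at hk
    simp only [_root_.mdiff]
    rcases hk with hk | hk
    · have h1 := congrFun (h0 k (by omega)) x
      have h2 := congrFun (h0 (k-1) (by omega)) x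
      rw [h1, h2, sub_self]
    · have h1 := congrFun (htop k (by omega)) x
      have h2 := congrFun (htop (k-1) (by omega)) x
      rw [h1, h2, sub_self]
  have hDa : ∀ k : ℤ, k ∉ S → ∀ x, _root_.mdiff d k a x = 0 :=
    hmd a loa hia ha0 hatop (by omega) (by omega)
  have hDb : ∀ k : ℤ, k ∉ S → ∀ x, _root_.mdiff d k b x = 0 :=
    hmd b lob hib hb0 hbtop (by omega) (by omega)
  have hDf : ∀ k : ℤ, k ∉ S → ∀ x, _root_.mdiff d k f x = 0 :=
    hmd f lof hif hf0 hftop (by omega) (by omega)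
  have hElob : condExpD d lo b = fun _ => 0 := hb0 lo (by omega)
  -- finite forms of the operators
  have hrop : rOp d b f = fun x => ∑ j ∈ S, condExpD d (j-1) b x * _root_.mdiff d j f x := by
    funext x
    simp only [rOp]
    exact tsum_eq_sum (fun j hj => by rw [hDf j hj x, mul_zero])
  have hpiOp : ∀ g : ℝ → ℂ, piOp d a g =
      fun x => ∑ k ∈ S, _root_.mdiff d k a x * condExpD d (k-1) g x := by
    intro g
    funext x
    simp only [piOp]
    exact tsum_eq_sum (fun k hk => by rw [hDa k hk x, zero_mul])
  have hpb : piOp d b f = fun x => ∑ j ∈ S, _root_.mdiff d j b x * condExpD d (j-1) f x := by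
    funext x
    simp only [piOp]
    exact tsum_eq_sum (fun j hj => by rw [hDb j hj x, zero_mul])
  have hlb : lamOp d b f = fun x => ∑ j ∈ S, _root_.mdiff d j b x * _root_.mdiff d j f x := by
    funext x
    simp only [lamOp]
    exact tsum_eq_sum (fun j hj => by rw [hDb j hj x, zero_mul])
  have hPL : (fun t => piOp d b f t + lamOp d b f t)
      = fun x => ∑ j ∈ S, _root_.mdiff d j b x * condExpD d j f x := by
    funext x
    rw [hpb, hlb, ← Finset.sum_add_distrib]
    apply Finset.sum_congr rfl
    intro j _
    simp only [_root_.mdiff]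
    ring
  -- E_{k-1} of rOp b f
  have hErop : ∀ k : ℤ, ∀ x : ℝ, condExpD d (k-1) (rOp d b f) x =
      ∑ j ∈ S, (if j ≤ k-1 then condExpD d (j-1) b x * _root_.mdiff d j f x else 0) := by
    intro k x
    rw [hrop, condExpD_finset_sum S _
      (fun j _ => ((hbDS.condExpD hd (j-1)).mul (hfDS.mdiff hd j) hd).integrable) (k-1)]
    exact Finset.sum_congr rfl (fun j _ => Emix1 hd hbDS hfDS j (k-1) x)
  -- E_m of piOp a f
  have hEpaf : ∀ m : ℤ, ∀ x : ℝ, condExpD d m (piOp d a f) x =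
      ∑ j ∈ S, (if j ≤ m then _root_.mdiff d j a x * condExpD d (j-1) f x else 0) := by
    intro m x
    rw [hpiOp f, condExpD_finset_sum S _
      (fun j _ => ((haDS.mdiff hd j).mul (hfDS.condExpD hd (j-1)) hd).integrable) m]
    exact Finset.sum_congr rfl (fun j _ => Emix2 hd haDS hfDS j m x)
  -- martingale differences of piOp a f
  have hdpaf : ∀ k : ℤ, ∀ x : ℝ, _root_.mdiff d k (piOp d a f) x =
      if k ∈ S then _root_.mdiff d k a x * condExpD d (k-1) f x else 0 := by
    intro k x
    simp only [_root_.mdiff]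
    rw [hEpaf k x, hEpaf (k-1) x, ← Finset.sum_sub_distrib,
      Finset.sum_congr rfl (fun j _ => ite_sub_ite j k _),
      Finset.sum_ite_eq' S k (fun j => _root_.mdiff d j a x * condExpD d (j-1) f x)]
    rfl
  -- E_{k-1} of (piOp b f + lamOp b f)
  have hEPL : ∀ k : ℤ, ∀ x : ℝ,
      condExpD d (k-1) (fun t => piOp d b f t + lamOp d b f t) x =
      ∑ j ∈ S, (if j ≤ k-1 then _root_.mdiff d j b x * condExpD d j f x
        else condExpD d (k-1) (fun t => _root_.mdiff d j b t * _root_.mdiff d j f t) x) := by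
    intro k x
    rw [hPL, condExpD_finset_sum S _
      (fun j _ => ((hbDS.mdiff hd j).mul (hfDS.condExpD hd j) hd).integrable) (k-1)]
    apply Finset.sum_congr rfl
    intro j _
    by_cases h : j ≤ k-1
    · rw [if_pos h, condExpD_of_step hd
        ((Step.mono hd h (step_mdiff hd j b)).mul
          (Step.mono hd h (step_condExpD d j f)))]
    · rw [if_neg h, Emix4 hd hbDS hfDS (by omega)]
  -- the four main expressions
  apply Filter.Eventually.of_forall
  intro x
  have hA : piOp d a (rOp d b f) x = ∑ k ∈ S, _root_.mdiff d k a x *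
      (∑ j ∈ S, (if j ≤ k-1 then condExpD d (j-1) b x * _root_.mdiff d j f x else 0)) := by
    rw [congrFun (hpiOp (rOp d b f)) x]
    exact Finset.sum_congr rfl (fun k _ => by rw [hErop k x])
  have hB : rOp d b (piOp d a f) x = ∑ k ∈ S, condExpD d (k-1) b x *
      (_root_.mdiff d k a x * condExpD d (k-1) f x) := by
    simp only [rOp]
    rw [tsum_eq_sum (s := S) (fun k hk => by
      rw [hdpaf k x, if_neg hk, mul_zero])]
    exact Finset.sum_congr rfl (fun k hk => by rw [hdpaf k x, if_pos hk])
  have hC : piOp d a (fun t => piOp d b f t + lamOp d b f t) x =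
      ∑ k ∈ S, _root_.mdiff d k a x *
        (∑ j ∈ S, (if j ≤ k-1 then _root_.mdiff d j b x * condExpD d j f x
          else condExpD d (k-1) (fun t => _root_.mdiff d j b t * _root_.mdiff d j f t) x)) := by
    rw [congrFun (hpiOp (fun t => piOp d b f t + lamOp d b f t)) x]
    exact Finset.sum_congr rfl (fun k _ => by rw [hEPL k x])
  have hD : vOp d a b f x = ∑ k ∈ S, _root_.mdiff d k a x *
      (∑ j ∈ S, (if k ≤ j then
        condExpD d (k-1) (fun t => _root_.mdiff d j b t * _root_.mdiff d j f t) x else 0)) := by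
    simp only [vOp]
    rw [tsum_eq_sum (s := S) (fun k hk => by rw [hDa k hk x, zero_mul])]
    apply Finset.sum_congr rfl
    intro k _
    congr 1
    have hinner : (fun t => ∑' j : ℤ, if k ≤ j then _root_.mdiff d j b t * _root_.mdiff d j f t else 0)
        = fun t => ∑ j ∈ S, (if k ≤ j then _root_.mdiff d j b t * _root_.mdiff d j f t else 0) := by
      funext t
      refine tsum_eq_sum (fun j hj => ?_)
      by_cases h : k ≤ j
      · rw [if_pos h, hDb j hj t, zero_mul]
      · rw [if_neg h]
    rw [hinner, condExpD_finset_sum S _ (fun j _ => by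
      by_cases h : k ≤ j
      · simp only [if_pos h]
        exact ((hbDS.mdiff hd j).mul (hfDS.mdiff hd j) hd).integrable
      · simp only [if_neg h]
        exact integrable_zero _ _ _) (k-1)]
    apply Finset.sum_congr rfl
    intro j _
    by_cases h : k ≤ j
    · simp only [if_pos h]
    · simp only [if_neg h]
      exact congrFun (condExpD_zero (k-1)) x
  rw [hA, hB, hC, hD]
  -- final algebra
  have hper : ∀ k ∈ S,
      _root_.mdiff d k a x *
        (∑ j ∈ S, (if j ≤ k-1 then condExpD d (j-1) b x * _root_.mdiff d j f x else 0)) -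
      condExpD d (k-1) b x * (_root_.mdiff d k a x * condExpD d (k-1) f x) =
      -(_root_.mdiff d k a x *
        (∑ j ∈ S, (if j ≤ k-1 then _root_.mdiff d j b x * condExpD d j f x
          else condExpD d (k-1) (fun t => _root_.mdiff d j b t * _root_.mdiff d j f t) x))) +
      _root_.mdiff d k a x *
        (∑ j ∈ S, (if k ≤ j then
          condExpD d (k-1) (fun t => _root_.mdiff d j b t * _root_.mdiff d j f t) x else 0)) := by
    intro k hk
    have hkS := Finset.mem_Icc.1 (hSdef ▸ hk)
    -- split the mixed sum
    have hsplitQ : (∑ j ∈ S, (if j ≤ k-1 then _root_.mdiff d j b x * condExpD d j f x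
          else condExpD d (k-1) (fun t => _root_.mdiff d j b t * _root_.mdiff d j f t) x)) =
        (∑ j ∈ S, (if j ≤ k-1 then _root_.mdiff d j b x * condExpD d j f x else 0)) +
        (∑ j ∈ S, (if k ≤ j then
          condExpD d (k-1) (fun t => _root_.mdiff d j b t * _root_.mdiff d j f t) x else 0)) := by
      rw [← Finset.sum_add_distrib]
      apply Finset.sum_congr rfl
      intro j _
      by_cases h : j ≤ k-1
      · rw [if_pos h, if_pos h, if_neg (by omega), add_zero]
      · rw [if_neg h, if_neg h, if_pos (by omega), zero_add]
    -- telescoping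
    have htel : (∑ j ∈ S, (if j ≤ k-1 then condExpD d (j-1) b x * _root_.mdiff d j f x else 0)) +
        (∑ j ∈ S, (if j ≤ k-1 then _root_.mdiff d j b x * condExpD d j f x else 0)) =
        condExpD d (k-1) b x * condExpD d (k-1) f x := by
      rw [← Finset.sum_add_distrib]
      have hstep1 : ∀ j ∈ S,
          ((if j ≤ k-1 then condExpD d (j-1) b x * _root_.mdiff d j f x else 0) +
           (if j ≤ k-1 then _root_.mdiff d j b x * condExpD d j f x else 0)) =
          (if j ≤ k-1 then (condExpD d j b x * condExpD d j f x -
            condExpD d (j-1) b x * condExpD d (j-1) f x) else 0) := by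
        intro j _
        by_cases h : j ≤ k-1
        · rw [if_pos h, if_pos h, if_pos h]
          simp only [_root_.mdiff]
          ring
        · rw [if_neg h, if_neg h, if_neg h, add_zero]
      rw [Finset.sum_congr rfl hstep1, ← Finset.sum_filter]
      have hfil : S.filter (fun j => j ≤ k - 1) = Finset.Icc (lo+1) (k-1) := by
        ext t
        simp only [hSdef, Finset.mem_filter, Finset.mem_Icc]
        omega
      rw [hfil, telescope (fun j => condExpD d j b x * condExpD d j f x) lo (k-1) (by omega)]
      rw [congrFun hElob x, zero_mul, sub_zero]
    rw [hsplitQ]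
    linear_combination (_root_.mdiff d k a x) * htel
  rw [← Finset.sum_sub_distrib, ← Finset.sum_neg_distrib, ← Finset.sum_add_distrib]
  exact Finset.sum_congr rfl hper
end
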